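/- Let n ≥ 2 and m ≥ 2 be integers and let H be a real number with cot(π/m) < H < (m² − 2)·√(n−1)/(n·√(m² − 1)). Then 2·arccot(H) < 2π/m < π·√(2 − 2nH/√(4(n−1) + n²H²)), where arccot(H) = π/2 − arctan(H). -/
import Mathlib


open Real

set_option maxHeartbeats 1000000 in
/-- For integers `n, m ≥ 2` and `cot(π/m) < H < (m²−2)√(n−1)/(n√(m²−1))`,
one has `2 arccot H < 2π/m < π √(2 − 2nH/√(4(n−1) + n²H²))`. -/
theorem stmt_13 (n m : ℕ) (hn : 2 ≤ n) (hm : 2 ≤ m) (H : ℝ)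
    (h1 : Real.cot (Real.pi / (m : ℝ)) < H)
    (h2 : H < ((m : ℝ) ^ 2 - 2) * Real.sqrt ((n : ℝ) - 1)
      / ((n : ℝ) * Real.sqrt ((m : ℝ) ^ 2 - 1))) :
    2 * (Real.pi / 2 - Real.arctan H) < 2 * Real.pi / (m : ℝ) ∧
    2 * Real.pi / (m : ℝ) < Real.pi * Real.sqrt (2 - 2 * (n : ℝ) * H
      / Real.sqrt (4 * ((n : ℝ) - 1) + (n : ℝ) ^ 2 * H ^ 2)) := by
  have hm2 : (2 : ℝ) ≤ (m : ℝ) := by exact_mod_cast hm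
  have hn2 : (2 : ℝ) ≤ (n : ℝ) := by exact_mod_cast hn
  have hmpos : (0 : ℝ) < (m : ℝ) := by linarith
  have hnpos : (0 : ℝ) < (n : ℝ) := by linarith
  have hπm_pos : 0 < Real.pi / (m : ℝ) := div_pos Real.pi_pos hmpos
  have hπm_le : Real.pi / (m : ℝ) ≤ Real.pi / 2 :=
    div_le_div_of_nonneg_left Real.pi_pos.le (by norm_num) hm2
  -- cot(π/m) ≥ 0, hence H > 0
  have hcot_nonneg : 0 ≤ Real.cot (Real.pi / (m : ℝ)) := by
    rw [Real.cot_eq_cos_div_sin]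
    apply div_nonneg
    · exact Real.cos_nonneg_of_mem_Icc ⟨by linarith, hπm_le⟩
    · exact (Real.sin_pos_of_pos_of_lt_pi hπm_pos
        (lt_of_le_of_lt hπm_le (by linarith [Real.pi_pos]))).le
  have hH : 0 < H := lt_of_le_of_lt hcot_nonneg h1
  constructor
  · -- first inequality
    have htan : Real.tan (Real.pi / 2 - Real.pi / (m : ℝ)) = Real.cot (Real.pi / (m : ℝ)) := by
      rw [Real.tan_pi_div_two_sub, Real.cot_eq_cos_div_sin, Real.tan_eq_sin_div_cos, inv_div]
    have harc : Real.arctan (Real.cot (Real.pi / (m : ℝ))) = Real.pi / 2 - Real.pi / (m : ℝ) := by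
      rw [← htan]
      exact Real.arctan_tan (by linarith) (by linarith)
    have := Real.arctan_strictMono h1
    rw [harc] at this
    have : Real.pi / 2 - Real.pi / (m : ℝ) < Real.arctan H := this
    have h2πm : 2 * Real.pi / (m : ℝ) = 2 * (Real.pi / (m : ℝ)) := by ring
    rw [h2πm]; linarith
  · -- second inequality
    set S := Real.sqrt (4 * ((n : ℝ) - 1) + (n : ℝ) ^ 2 * H ^ 2) with hS
    have hSarg : (0 : ℝ) < 4 * ((n : ℝ) - 1) + (n : ℝ) ^ 2 * H ^ 2 := by
      have : 0 ≤ (n : ℝ) ^ 2 * H ^ 2 := by positivity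
      nlinarith
    clear_value S
    have hSpos : 0 < S := hS ▸ Real.sqrt_pos.mpr hSarg
    have hSsq : S ^ 2 = 4 * ((n : ℝ) - 1) + (n : ℝ) ^ 2 * H ^ 2 := hS ▸ Real.sq_sqrt hSarg.le
    -- from h2: n H √(m²-1) < (m²-2) √(n-1)
    have hm1 : (0 : ℝ) < (m : ℝ) ^ 2 - 1 := by nlinarith
    have hn1 : (0 : ℝ) ≤ (n : ℝ) - 1 := by linarith
    have hsm : 0 < Real.sqrt ((m : ℝ) ^ 2 - 1) := Real.sqrt_pos.mpr hm1
    have hD : 0 < (n : ℝ) * Real.sqrt ((m : ℝ) ^ 2 - 1) := mul_pos hnpos hsm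
    have hkey : H * ((n : ℝ) * Real.sqrt ((m : ℝ) ^ 2 - 1))
        < ((m : ℝ) ^ 2 - 2) * Real.sqrt ((n : ℝ) - 1) := (lt_div_iff₀ hD).mp h2
    have hkey2 : (n : ℝ) ^ 2 * H ^ 2 * ((m : ℝ) ^ 2 - 1)
        < ((m : ℝ) ^ 2 - 2) ^ 2 * ((n : ℝ) - 1) := by
      have hLpos : 0 < H * ((n : ℝ) * Real.sqrt ((m : ℝ) ^ 2 - 1)) := mul_pos hH hD
      have := mul_self_lt_mul_self hLpos.le hkey
      have e1 : Real.sqrt ((m : ℝ) ^ 2 - 1) * Real.sqrt ((m : ℝ) ^ 2 - 1) = (m : ℝ) ^ 2 - 1 :=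
        Real.mul_self_sqrt hm1.le
      have e2 : Real.sqrt ((n : ℝ) - 1) * Real.sqrt ((n : ℝ) - 1) = (n : ℝ) - 1 :=
        Real.mul_self_sqrt hn1
      nlinarith [this, e1, e2]
    -- main: n H m² < (m²-2) S
    have hm22 : (0 : ℝ) < (m : ℝ) ^ 2 - 2 := by nlinarith
    have hmain : (n : ℝ) * H * (m : ℝ) ^ 2 < ((m : ℝ) ^ 2 - 2) * S := by
      have hsq : ((n : ℝ) * H * (m : ℝ) ^ 2) ^ 2 < (((m : ℝ) ^ 2 - 2) * S) ^ 2 := by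
        have e3 : (((m : ℝ) ^ 2 - 2) * S) ^ 2 = ((m : ℝ) ^ 2 - 2) ^ 2 * S ^ 2 := by ring
        rw [e3, hSsq]
        have expand : ((m : ℝ) ^ 2 - 2) ^ 2 * (4 * ((n : ℝ) - 1) + (n : ℝ) ^ 2 * H ^ 2)
            - ((n : ℝ) * H * (m : ℝ) ^ 2) ^ 2
            = 4 * (((m : ℝ) ^ 2 - 2) ^ 2 * ((n : ℝ) - 1)
              - (n : ℝ) ^ 2 * H ^ 2 * ((m : ℝ) ^ 2 - 1)) := by ring
        linarith [expand]
      exact lt_of_pow_lt_pow_left₀ 2 (by positivity) hsq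
    -- deduce 2nH/S < 2 - 4/m²
    have hfrac : 2 * (n : ℝ) * H / S < 2 - 4 / (m : ℝ) ^ 2 := by
      have hm2pos : (0 : ℝ) < (m : ℝ) ^ 2 := by positivity
      have h5 : 2 * (n : ℝ) * H / S < 2 * ((m : ℝ) ^ 2 - 2) / (m : ℝ) ^ 2 := by
        rw [div_lt_div_iff₀ hSpos hm2pos]
        nlinarith [hmain]
      have hmne : ((m : ℝ)) ≠ 0 := ne_of_gt hmpos
      have h6 : 2 * ((m : ℝ) ^ 2 - 2) / (m : ℝ) ^ 2 = 2 - 4 / (m : ℝ) ^ 2 := by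
        field_simp
        ring
      linarith [h5, h6.le, h6.ge]
    -- conclude
    have h4m : ((2 : ℝ) / (m : ℝ)) ^ 2 = 4 / (m : ℝ) ^ 2 := by
      field_simp; ring
    have hlt : (2 : ℝ) / (m : ℝ) < Real.sqrt (2 - 2 * (n : ℝ) * H / S) := by
      rw [Real.lt_sqrt (by positivity), h4m]; linarith
    calc 2 * Real.pi / (m : ℝ) = Real.pi * (2 / (m : ℝ)) := by ring
      _ < Real.pi * Real.sqrt (2 - 2 * (n : ℝ) * H / S) :=
          (mul_lt_mul_iff_right₀ Real.pi_pos).mpr hlt
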